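/- Let M be a compact metric space, f_1,…,f_k : M → M continuous, and let ω ∈ Σ_k be a weakly hyperbolic sequence, i.e., I_ω = ⋂_{n} f_{ω_0}∘⋯∘f_{ω_n}(M) = {π(ω)} is a singleton. Then for every sequence (μ_n) of Borel probability measures on M, the pushforward measures (f_{ω_0})_* (f_{ω_1})_* ⋯ (f_{ω_n})_* μ_n converge weakly-* to the Dirac measure δ_{π(ω)} as n → ∞. -/

import Mathlib

open Set MeasureTheory Filter Topology

/-- `comps f ω n = f (ω 0) ∘ f (ω 1) ∘ ⋯ ∘ f (ω n)`. -/
def comps {M : Type*} {k : ℕ} (f : Fin k → M → M) (ξ : ℕ → Fin k) : ℕ → M → M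
  | 0 => f (ξ 0)
  | n + 1 => comps f ξ n ∘ f (ξ (n + 1))

lemma comps_continuous {M : Type*} [TopologicalSpace M] {k : ℕ} (f : Fin k → M → M)
    (hf : ∀ i, Continuous (f i)) (ω : ℕ → Fin k) (n : ℕ) : Continuous (comps f ω n) := by
  induction n with
  | zero => exact hf _
  | succ n ih => exact ih.comp (hf _)

/-- For a weakly hyperbolic sequence `ω` (with `I_ω = {p}`), the pushforwards
`(f_{ω_0})_* ⋯ (f_{ω_n})_* μ_n` converge weakly-* to `δ_p`. -/
theorem stmt8 {M : Type*} [MetricSpace M] [CompactSpace M]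
    [MeasurableSpace M] [BorelSpace M]
    {k : ℕ} (f : Fin k → M → M) (hf : ∀ i, Continuous (f i))
    (ω : ℕ → Fin k) (p : M)
    (hω : (⋂ n, comps f ω n '' Set.univ) = {p})
    (μ : ℕ → Measure M) (hμ : ∀ n, IsProbabilityMeasure (μ n)) :
    ∀ g : M → ℝ, Continuous g →
      Tendsto (fun n => ∫ x, g x ∂((μ n).map (comps f ω n))) atTop (𝓝 (g p)) := by
  intro g hg
  have hcont : ∀ n, Continuous (comps f ω n) := comps_continuous f hf ω
  set K : ℕ → Set M := fun n => comps f ω n '' Set.univ with hK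
  have hKc : ∀ n, IsCompact (K n) := fun n => isCompact_univ.image (hcont n)
  have hanti : Antitone K := antitone_nat_of_succ_le (fun n => by
    show comps f ω (n + 1) '' Set.univ ⊆ comps f ω n '' Set.univ
    rw [show comps f ω (n + 1) = comps f ω n ∘ f (ω (n + 1)) from rfl, image_comp]
    exact image_mono (subset_univ _))
  rw [Metric.tendsto_atTop]
  intro ε hε
  set U : Set M := g ⁻¹' Metric.ball (g p) (ε / 2) with hU
  have hUopen : IsOpen U := hg.isOpen_preimage _ Metric.isOpen_ball
  have hpU : p ∈ U := by simp [hU, hε]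
  obtain ⟨N, hN⟩ : ∃ N, K N ⊆ U := by
    apply exists_subset_nhds_of_isCompact' (hanti.directed_ge) hKc
      (fun n => (hKc n).isClosed)
    intro x hx
    rw [show (⋂ i, K i) = {p} from hω] at hx
    rw [hx]
    exact hUopen.mem_nhds hpU
  refine ⟨N, fun n hn => ?_⟩
  have hKU : K n ⊆ U := (hanti hn).trans hN
  haveI := hμ n
  have hint : ∫ x, g x ∂((μ n).map (comps f ω n)) = ∫ x, g (comps f ω n x) ∂(μ n) :=
    integral_map (hcont n).aemeasurable hg.aestronglyMeasurable
  rw [hint]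
  have hi1 : Integrable (fun x => g (comps f ω n x)) (μ n) :=
    integrableOn_univ.mp ((hg.comp (hcont n)).continuousOn.integrableOn_compact isCompact_univ)
  have hsub : ∫ x, g (comps f ω n x) ∂(μ n) - g p
      = ∫ x, (g (comps f ω n x) - g p) ∂(μ n) := by
    rw [integral_sub hi1 (integrable_const _), integral_const]
    simp
  rw [Real.dist_eq, hsub]
  have hbound : ∀ x, ‖g (comps f ω n x) - g p‖ ≤ ε / 2 := by
    intro x
    have : comps f ω n x ∈ U := hKU ⟨x, mem_univ x, rfl⟩
    have := Metric.mem_ball.mp this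
    rw [Real.dist_eq] at this
    exact le_of_lt this
  have := norm_integral_le_of_norm_le_const (μ := μ n)
      (C := ε / 2) (Filter.Eventually.of_forall hbound)
  simp only [measure_univ, ENNReal.toReal_one, probReal_univ, mul_one] at this
  calc ‖∫ x, (g (comps f ω n x) - g p) ∂(μ n)‖ ≤ ε / 2 := by
        simpa using this
    _ < ε := by linarith
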